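/- Let X be a smooth compact manifold with metric d and let φ, φ̂ ∈ Diff¹(X) be topologically conjugate by a homeomorphism g : X → X, i.e. g ∘ φ = φ̂ ∘ g. Fix a locally finite Borel reference measure ℓ on X. Let μ be a physical measure for φ with respect to ℓ, with open neighbourhood U of its support, and let ν be a Borel probability measure absolutely continuous with respect to ℓ with ν(U ∩ g(U)) = 1. Suppose φ, g and g⁻¹ are nonsingular with respect to ℓ. Then limsup_{T→∞} d_P( (1/T) Σ_{t=0}^{T-1} φ^t_*ν, (1/T) Σ_{t=0}^{T-1} φ̂^t_*ν ) ≤ d_P(μ, g_*μ). -/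

import Mathlib

open MeasureTheory Filter Topology ENNReal

noncomputable section

/-- Pushforward of a probability measure under a measurable map. -/
def pushPM {α β : Type*} [MeasurableSpace α] [MeasurableSpace β]
    (f : α → β) (hf : Measurable f) (ν : ProbabilityMeasure α) : ProbabilityMeasure β :=
  ⟨(ν : Measure α).map f, Measure.isProbabilityMeasure_map hf.aemeasurable⟩

/-- Cesàro average `(1/(T+1)) ∑_{t=0}^{T} s t` of a sequence of probability measures. -/
def avgPM {α : Type*} [MeasurableSpace α] (s : ℕ → ProbabilityMeasure α) (T : ℕ) :
    ProbabilityMeasure α :=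
  ⟨((T + 1 : ℕ) : ℝ≥0∞)⁻¹ • ∑ t ∈ Finset.range (T + 1), (s t : Measure α), by
    constructor
    simp only [Measure.smul_apply, Measure.finset_sum_apply, measure_univ, Finset.sum_const,
      Finset.card_range, nsmul_eq_mul, mul_one, smul_eq_mul]
    rw [ENNReal.inv_mul_cancel] <;> simp⟩

/-- The Dirac probability measure at a point. -/
def diracPM {α : Type*} [MeasurableSpace α] (x : α) : ProbabilityMeasure α :=
  ⟨Measure.dirac x, inferInstance⟩

/-- Empirical measure `(1/(T+1)) ∑_{t=0}^{T} δ_{f^t(x)}`. -/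
def empMeas {α : Type*} [MeasurableSpace α] (f : α → α) (x : α) (T : ℕ) :
    ProbabilityMeasure α :=
  avgPM (fun t => diracPM (f^[t] x)) T

/-- Basin of a probability measure: points whose empirical measures converge weakly to `μ`. -/
def mBasin {α : Type*} [TopologicalSpace α] [MeasurableSpace α] [OpensMeasurableSpace α]
    (f : α → α) (μ : ProbabilityMeasure α) : Set α :=
  {x | Tendsto (fun T : ℕ => empMeas f x T) atTop (𝓝 μ)}

/-- Support of a measure: points all of whose open neighbourhoods have positive measure. -/
def msupport {α : Type*} [TopologicalSpace α] [MeasurableSpace α] (m : Measure α) : Set α :=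
  {x | ∀ u : Set α, IsOpen u → x ∈ u → m u ≠ 0}

section Helpers

open BoundedContinuousFunction

variable {X : Type*} [MetricSpace X] [MeasurableSpace X] [BorelSpace X]

lemma integral_avgPM (s : ℕ → ProbabilityMeasure X) (T : ℕ) (f : X →ᵇ ℝ) :
    ∫ x, f x ∂(avgPM s T : Measure X)
      = ((T : ℝ) + 1)⁻¹ * ∑ t ∈ Finset.range (T + 1), ∫ x, f x ∂(s t : Measure X) := by
  show ∫ x, f x ∂(((T + 1 : ℕ) : ℝ≥0∞)⁻¹ • ∑ t ∈ Finset.range (T + 1), (s t : Measure X)) = _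
  rw [integral_smul_measure, integral_finset_sum_measure (fun t _ => f.integrable _),
    ENNReal.toReal_inv, smul_eq_mul]
  congr 1
  simp [ENNReal.toReal_add]

lemma integral_empMeas (ψ : X → X) (x : X) (T : ℕ) (f : X →ᵇ ℝ) :
    ∫ y, f y ∂(empMeas ψ x T : Measure X)
      = ((T : ℝ) + 1)⁻¹ * ∑ t ∈ Finset.range (T + 1), f (ψ^[t] x) := by
  rw [empMeas, integral_avgPM]
  congr 1
  refine Finset.sum_congr rfl fun t _ => ?_
  exact integral_dirac _ _

lemma integral_pushPM {h : X → X} (hm : Measurable h) (ν : ProbabilityMeasure X) (f : X →ᵇ ℝ) :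
    ∫ x, f x ∂(pushPM h hm ν : Measure X) = ∫ x, f (h x) ∂(ν : Measure X) :=
  integral_map hm.aemeasurable f.continuous.aestronglyMeasurable

lemma keyConv {ψ : X → X} (hψc : Continuous ψ) (ρ ν : ProbabilityMeasure X)
    (hae : ∀ᵐ x ∂(ν : Measure X), Tendsto (fun T : ℕ => empMeas ψ x T) atTop (𝓝 ρ)) :
    Tendsto (fun T : ℕ => avgPM (fun t => pushPM (ψ^[t]) (hψc.measurable.iterate t) ν) T)
      atTop (𝓝 ρ) := by
  rw [ProbabilityMeasure.tendsto_iff_forall_integral_tendsto]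
  intro f
  have hψt : ∀ t : ℕ, Continuous (ψ^[t]) := fun t => hψc.iterate t
  have heq : ∀ T : ℕ,
      ∫ x, f x ∂(avgPM (fun t => pushPM (ψ^[t]) (hψc.measurable.iterate t) ν) T : Measure X)
        = ∫ x, ((T : ℝ) + 1)⁻¹ * ∑ t ∈ Finset.range (T + 1), f (ψ^[t] x) ∂(ν : Measure X) := by
    intro T
    rw [integral_avgPM, integral_const_mul]
    congr 1
    calc ∑ t ∈ Finset.range (T + 1),
          ∫ x, f x ∂(pushPM (ψ^[t]) (hψc.measurable.iterate t) ν : Measure X)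
        = ∑ t ∈ Finset.range (T + 1), ∫ x, f (ψ^[t] x) ∂(ν : Measure X) :=
          Finset.sum_congr rfl fun t _ => integral_pushPM _ _ _
      _ = ∫ x, ∑ t ∈ Finset.range (T + 1), f (ψ^[t] x) ∂(ν : Measure X) :=
          (integral_finset_sum _
            (fun t _ => (f.compContinuous ⟨ψ^[t], hψt t⟩).integrable (ν : Measure X))).symm
  simp only [heq]
  have hconst : ∫ y, f y ∂(ρ : Measure X)
      = ∫ _x, (∫ y, f y ∂(ρ : Measure X)) ∂(ν : Measure X) := by
    simp
  rw [hconst]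
  refine tendsto_integral_of_dominated_convergence (fun _ => ‖f‖) ?_ ?_ ?_ ?_
  · intro T
    exact ((continuous_const.mul (continuous_finset_sum _
      (fun t _ => f.continuous.comp (hψt t)))).aestronglyMeasurable)
  · exact integrable_const _
  · intro T
    refine Eventually.of_forall fun x => ?_
    rw [← integral_empMeas ψ x T f]
    calc ‖∫ y, f y ∂(empMeas ψ x T : Measure X)‖
        ≤ ‖f‖ * ((empMeas ψ x T : Measure X) Set.univ).toReal :=
          norm_integral_le_of_norm_le_const (Eventually.of_forall fun y => f.norm_coe_le_norm y)
      _ = ‖f‖ := by simp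
  · filter_upwards [hae] with x hx
    have := ProbabilityMeasure.tendsto_iff_forall_integral_tendsto.mp hx f
    simpa only [integral_empMeas ψ x _ f] using this

end Helpers

open BoundedContinuousFunction

set_option maxHeartbeats 1000000

/-- For topologically conjugate `C¹` diffeomorphisms `φ, φ̂` of a smooth compact
manifold, `μ` a physical measure for `φ` (w.r.t. the locally finite reference measure `ℓ`, with
open neighbourhood `U` of its support), and `ν ≪ ℓ` with `ν(U ∩ g(U)) = 1`, the Cesàro averages
of the transported measures stay asymptotically within `dP(μ, g_*μ)` of each other. -/
theorem statement4 {E : Type*} [NormedAddCommGroup E] [NormedSpace ℝ E]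
    {H : Type*} [TopologicalSpace H] (I : ModelWithCorners ℝ E H)
    {X : Type*} [MetricSpace X] [CompactSpace X] [ChartedSpace H X]
    [IsManifold I (⊤ : ℕ∞) X] [MeasurableSpace X] [BorelSpace X]
    -- `φ, φ̂ ∈ Diff¹(X)`, conjugate by the homeomorphism `g`:
    (φ φh g : X ≃ₜ X)
    (hφ : ContMDiff I I 1 ⇑φ) (hφinv : ContMDiff I I 1 ⇑φ.symm)
    (hφh : ContMDiff I I 1 ⇑φh) (hφhinv : ContMDiff I I 1 ⇑φh.symm)
    (hconj : ∀ x, g (φ x) = φh (g x))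
    -- `dP` is a metric on `P(X)` metrizing the weak topology:
    (dP : ProbabilityMeasure X → ProbabilityMeasure X → ℝ)
    (hdP_symm : ∀ a b, dP a b = dP b a)
    (hdP_tri : ∀ a b c, dP a c ≤ dP a b + dP b c)
    (hdP_eq : ∀ a b, dP a b = 0 ↔ a = b)
    (hdP_top : ∀ s : Set (ProbabilityMeasure X),
      IsOpen s ↔ ∀ a ∈ s, ∃ ε > (0 : ℝ), ∀ b, dP a b < ε → b ∈ s)
    -- locally finite Borel reference measure:
    (ℓ : Measure X) [IsLocallyFiniteMeasure ℓ]
    -- `μ` is a physical measure for `φ`, with open neighbourhood `U` of its support: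
    (μ : ProbabilityMeasure X) (U : Set X)
    (hUopen : IsOpen U) (hUsupp : msupport (μ : Measure X) ⊆ U)
    (hcompact : IsCompact (msupport (μ : Measure X)))
    (hphys : ℓ (U \ mBasin ⇑φ μ) = 0)
    -- `ν ≪ ℓ` with `ν(U ∩ g(U)) = 1`:
    (ν : ProbabilityMeasure X)
    (hν : (ν : Measure X) ≪ ℓ) (hνU : (ν : Measure X) (U ∩ ⇑g '' U) = 1)
    -- `φ`, `g` and `g⁻¹` are nonsingular w.r.t. `ℓ`:
    (hnsφ : ℓ.map ⇑φ ≪ ℓ) (hnsg : ℓ.map ⇑g ≪ ℓ) (hnsginv : ℓ.map ⇑g.symm ≪ ℓ) :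
    Filter.limsup
      (fun T : ℕ => dP
        (avgPM (fun t => pushPM (⇑φ)^[t] (φ.continuous.measurable.iterate t) ν) T)
        (avgPM (fun t => pushPM (⇑φh)^[t] (φh.continuous.measurable.iterate t) ν) T))
      atTop
      ≤ dP μ (pushPM ⇑g g.continuous.measurable μ) := by
  set B := mBasin ⇑φ μ with hB
  -- nonnegativity of `dP`
  have hdP_nonneg : ∀ a b, 0 ≤ dP a b := by
    intro a b
    have h0 : dP a a = 0 := (hdP_eq a a).mpr rfl
    have ht := hdP_tri a b a
    have hs := hdP_symm b a
    linarith
  -- weak convergence implies `dP`-convergence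
  have hdPzero : ∀ (ρ : ProbabilityMeasure X) (a : ℕ → ProbabilityMeasure X),
      Tendsto a atTop (𝓝 ρ) → Tendsto (fun T => dP ρ (a T)) atTop (𝓝 0) := by
    intro ρ a ha
    rw [NormedAddCommGroup.tendsto_nhds_zero]
    intro ε hε
    have hopen : IsOpen {b | dP ρ b < ε} := by
      rw [hdP_top]
      intro c hc
      simp only [Set.mem_setOf_eq] at hc
      refine ⟨ε - dP ρ c, by linarith, fun b hb => ?_⟩
      have := hdP_tri ρ c b
      simp only [Set.mem_setOf_eq]
      linarith
    have hmem : ρ ∈ {b | dP ρ b < ε} := by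
      simp only [Set.mem_setOf_eq, (hdP_eq ρ ρ).mpr rfl]
      exact hε
    filter_upwards [ha (hopen.mem_nhds hmem)] with T hT
    rw [Real.norm_eq_abs, abs_of_nonneg (hdP_nonneg _ _)]
    exact hT
  -- conjugacy of iterates
  have hconj_iter : ∀ (t : ℕ) (x : X), (⇑φh)^[t] (g x) = g ((⇑φ)^[t] x) := by
    intro t
    induction t with
    | zero => intro x; simp
    | succ n ih =>
      intro x
      rw [Function.iterate_succ_apply, Function.iterate_succ_apply, ← hconj, ih]
  -- a.e. basin membership
  have hνUB : (ν : Measure X) (U \ B) = 0 := hν hphys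
  have hℓgUB : ℓ (⇑g '' (U \ B)) = 0 := by
    have h1 : ⇑g '' (U \ B) = ⇑g.symm ⁻¹' (U \ B) := by
      ext y
      constructor
      · rintro ⟨u, hu, rfl⟩
        simpa using hu
      · intro hy
        exact ⟨g.symm y, hy, g.apply_symm_apply y⟩
    rw [h1]
    have h2 := Measure.le_map_apply g.symm.continuous.measurable.aemeasurable (U \ B) (μ := ℓ)
    have h3 : (ℓ.map ⇑g.symm) (U \ B) = 0 := hnsginv hphys
    rw [h3] at h2
    exact le_antisymm h2 zero_le
  have hνgUB : (ν : Measure X) (⇑g '' (U \ B)) = 0 := hν hℓgUB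
  have hScompl : (ν : Measure X) ((U ∩ ⇑g '' U)ᶜ) = 0 := by
    have hmeas : MeasurableSet (U ∩ ⇑g '' U) :=
      hUopen.measurableSet.inter (g.isOpenMap U hUopen).measurableSet
    rw [measure_compl hmeas (measure_ne_top _ _), measure_univ, hνU, tsub_self]
  have hgood : ∀ᵐ x ∂(ν : Measure X), x ∈ B ∧ g.symm x ∈ B := by
    rw [ae_iff]
    refine measure_mono_null ?_
      (measure_union_null hScompl (measure_union_null hνUB hνgUB))
    intro x hx
    simp only [Set.mem_setOf_eq] at hx
    by_cases hxS : x ∈ U ∩ ⇑g '' U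
    · right
      by_cases hxB : x ∈ B
      · right
        obtain ⟨u, hu, hgu⟩ := hxS.2
        have hsx : g.symm x = u := by rw [← hgu, g.symm_apply_apply]
        have hsB : g.symm x ∉ B := fun h => hx ⟨hxB, h⟩
        exact ⟨g.symm x, ⟨hsx ▸ hu, hsB⟩, g.apply_symm_apply x⟩
      · left; exact ⟨hxS.1, hxB⟩
    · left; exact hxS
  -- convergence of the first Cesàro average to μ
  have hconv1 : Tendsto
      (fun T : ℕ => avgPM (fun t => pushPM (⇑φ)^[t] (φ.continuous.measurable.iterate t) ν) T)
      atTop (𝓝 μ) := by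
    refine keyConv φ.continuous μ ν ?_
    filter_upwards [hgood] with x hx using hx.1
  -- convergence of the second Cesàro average to g_*μ
  have hconv2 : Tendsto
      (fun T : ℕ => avgPM (fun t => pushPM (⇑φh)^[t] (φh.continuous.measurable.iterate t) ν) T)
      atTop (𝓝 (pushPM ⇑g g.continuous.measurable μ)) := by
    refine keyConv φh.continuous _ ν ?_
    filter_upwards [hgood] with x hx
    rw [ProbabilityMeasure.tendsto_iff_forall_integral_tendsto]
    intro f
    have hgx := ProbabilityMeasure.tendsto_iff_forall_integral_tendsto.mp hx.2
      (f.compContinuous ⟨⇑g, g.continuous⟩)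
    have heq : ∀ T : ℕ, ∫ y, f y ∂(empMeas (⇑φh) x T : Measure X)
        = ∫ y, (f.compContinuous ⟨⇑g, g.continuous⟩) y
            ∂(empMeas (⇑φ) (g.symm x) T : Measure X) := by
      intro T
      rw [integral_empMeas, integral_empMeas]
      congr 1
      refine Finset.sum_congr rfl fun t _ => ?_
      show f ((⇑φh)^[t] x) = f (g ((⇑φ)^[t] (g.symm x)))
      rw [← hconj_iter t (g.symm x), g.apply_symm_apply]
    have hlim : ∫ y, (f.compContinuous ⟨⇑g, g.continuous⟩) y ∂(μ : Measure X)
        = ∫ y, f y ∂(pushPM ⇑g g.continuous.measurable μ : Measure X) :=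
      (integral_pushPM g.continuous.measurable μ f).symm
    simp only [heq]
    rw [← hlim]
    exact hgx
  -- conclusion via the triangle inequality
  set gp := pushPM ⇑g g.continuous.measurable μ with hgp
  have h1 : Tendsto (fun T => dP μ
      (avgPM (fun t => pushPM (⇑φ)^[t] (φ.continuous.measurable.iterate t) ν) T))
      atTop (𝓝 0) := hdPzero _ _ hconv1
  have h2 : Tendsto (fun T => dP gp
      (avgPM (fun t => pushPM (⇑φh)^[t] (φh.continuous.measurable.iterate t) ν) T))
      atTop (𝓝 0) := hdPzero _ _ hconv2
  have hv : Tendsto (fun T => dP μ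
      (avgPM (fun t => pushPM (⇑φ)^[t] (φ.continuous.measurable.iterate t) ν) T)
      + dP μ gp
      + dP gp (avgPM (fun t => pushPM (⇑φh)^[t] (φh.continuous.measurable.iterate t) ν) T))
      atTop (𝓝 (0 + dP μ gp + 0)) := (h1.add tendsto_const_nhds).add h2
  have hle : ∀ T : ℕ, dP
      (avgPM (fun t => pushPM (⇑φ)^[t] (φ.continuous.measurable.iterate t) ν) T)
      (avgPM (fun t => pushPM (⇑φh)^[t] (φh.continuous.measurable.iterate t) ν) T)
      ≤ dP μ (avgPM (fun t => pushPM (⇑φ)^[t] (φ.continuous.measurable.iterate t) ν) T)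
        + dP μ gp
        + dP gp (avgPM (fun t => pushPM (⇑φh)^[t] (φh.continuous.measurable.iterate t) ν) T) := by
    intro T
    have t1 := hdP_tri
      (avgPM (fun t => pushPM (⇑φ)^[t] (φ.continuous.measurable.iterate t) ν) T) μ
      (avgPM (fun t => pushPM (⇑φh)^[t] (φh.continuous.measurable.iterate t) ν) T)
    have t2 := hdP_tri μ gp
      (avgPM (fun t => pushPM (⇑φh)^[t] (φh.continuous.measurable.iterate t) ν) T)
    have hs := hdP_symm
      (avgPM (fun t => pushPM (⇑φ)^[t] (φ.continuous.measurable.iterate t) ν) T) μ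
    linarith
  have hls := Filter.limsup_le_limsup (Eventually.of_forall hle)
      (Filter.isCoboundedUnder_le_of_le atTop (fun T => hdP_nonneg _ _))
      hv.isBoundedUnder_le
  rw [hv.limsup_eq] at hls
  simpa using hls

end
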